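/- Let d ≥ 2 and consider the complex polynomial p(s) = s·(s−1)·⋯·(s−d+2) − d! (that is, p(s) = (s)_{d−1} − d!, where (s)_{d−1} is the falling factorial with d−1 factors). Then p has exactly d−1 pairwise distinct complex roots (p is squarefree), s = d is a root of p, and every root z of p with z ≠ d satisfies Re(z) < d. -/

import Mathlib

open Polynomial Finset

private lemma prod_range_add_one (m : ℕ) :
    ∏ i ∈ Finset.range m, (i + 1) = m.factorial := by
  induction m with
  | zero => simp
  | succ m ih => rw [Finset.prod_range_succ, ih, Nat.factorial_succ, Nat.mul_comm]

private lemma prod_desc_nat (n : ℕ) :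
    ∏ i ∈ Finset.range n, (n + 1 - i) = (n + 1).factorial := by
  induction n with
  | zero => simp
  | succ n ih =>
    rw [Finset.prod_range_succ']
    have h1 : ∀ i, n + 1 + 1 - (i + 1) = n + 1 - i := fun i => by omega
    simp only [h1, Nat.sub_zero, ih]
    rw [Nat.factorial_succ (n + 1)]
    ring

private lemma prod_desc_cast (K : Type*) [Field K] [CharZero K] (n : ℕ) :
    ∏ i ∈ Finset.range n, (((n : K) + 1) - (i : K)) = ((n + 1).factorial : K) := by
  rw [← prod_desc_nat n, Nat.cast_prod]
  refine Finset.prod_congr rfl fun i hi => ?_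
  rw [Finset.mem_range] at hi
  have h : i ≤ n + 1 := by omega
  rw [Nat.cast_sub h]
  push_cast
  ring

private lemma prod_desc_nat' (m : ℕ) :
    ∏ i ∈ Finset.range m, (m - i) = m.factorial := by
  induction m with
  | zero => simp
  | succ m ih =>
    rw [Finset.prod_range_succ']
    have h1 : ∀ i, m + 1 - (i + 1) = m - i := fun i => by omega
    simp only [h1, Nat.sub_zero, ih]
    rw [Nat.factorial_succ]
    ring

private lemma prod_desc_cast' (K : Type*) [Field K] [CharZero K] (m : ℕ) :
    ∏ i ∈ Finset.range m, ((m : K) - (i : K)) = (m.factorial : K) := by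
  rw [← prod_desc_nat' m, Nat.cast_prod]
  refine Finset.prod_congr rfl fun i hi => ?_
  rw [Finset.mem_range] at hi
  rw [Nat.cast_sub (by omega)]

private lemma derivative_finset_prod (s : Finset ℕ) (f : ℕ → Polynomial ℂ) :
    derivative (∏ i ∈ s, f i) = ∑ j ∈ s, (∏ i ∈ s.erase j, f i) * derivative (f j) := by
  rw [Finset.prod_eq_multiset_prod, Polynomial.derivative_prod, Finset.sum_eq_multiset_sum]
  congr 1

private lemma aux_real (n : ℕ) (hn : 1 ≤ n) (x : ℝ)
    (hprod : ∏ j ∈ Finset.range n, (x - j) = ((n + 1).factorial : ℝ))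
    (hsum : ∑ j ∈ Finset.range n, (x - j)⁻¹ = 0) : False := by
  have hfacpos : (0 : ℝ) < ((n + 1).factorial : ℝ) := by
    exact_mod_cast (n + 1).factorial_pos
  have hne : ∀ j ∈ Finset.range n, x - (j : ℝ) ≠ 0 := by
    intro j hj h
    rw [Finset.prod_eq_zero hj h] at hprod
    exact hfacpos.ne' hprod.symm
  have hx0 : 0 < x := by
    by_contra h
    push_neg at h
    have h0 : x ≠ 0 := by
      have := hne 0 (Finset.mem_range.mpr hn); simpa using this
    have hxneg : x < 0 := lt_of_le_of_ne h h0
    have hlt : ∀ j ∈ Finset.range n, (x - (j : ℝ))⁻¹ < 0 := by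
      intro j hj
      have : (0 : ℝ) ≤ j := Nat.cast_nonneg j
      exact inv_lt_zero.mpr (by linarith)
    have := Finset.sum_neg hlt ⟨0, Finset.mem_range.mpr hn⟩
    rw [hsum] at this
    exact lt_irrefl 0 this
  have hxn : x < (n : ℝ) - 1 := by
    by_contra h
    push_neg at h
    have hpos : ∀ j ∈ Finset.range n, 0 < (x - (j : ℝ))⁻¹ := by
      intro j hj
      rw [Finset.mem_range] at hj
      have hj' : (j : ℝ) ≤ (n : ℝ) - 1 := by
        have : (j : ℝ) + 1 ≤ (n : ℝ) := by exact_mod_cast hj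
        linarith
      have hle : (j : ℝ) ≤ x := le_trans hj' h
      have hne' := hne j (Finset.mem_range.mpr hj)
      exact inv_pos.mpr (lt_of_le_of_ne (by linarith) (Ne.symm hne'))
    have := Finset.sum_pos hpos ⟨0, Finset.mem_range.mpr hn⟩
    rw [hsum] at this
    exact lt_irrefl 0 this
  set k := ⌊x⌋.toNat with hk
  have hfl : (0 : ℤ) ≤ ⌊x⌋ := Int.floor_nonneg.mpr hx0.le
  have hk0 : (k : ℝ) = (⌊x⌋ : ℝ) := by exact_mod_cast Int.toNat_of_nonneg hfl
  have hkx : (k : ℝ) ≤ x := by rw [hk0]; exact Int.floor_le x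
  have hxk1 : x < (k : ℝ) + 1 := by rw [hk0]; exact_mod_cast Int.lt_floor_add_one x
  have hkn : k + 1 < n := by
    have h1 : (k : ℝ) < (n : ℝ) - 1 := lt_of_le_of_lt hkx hxn
    have h2 : ((k + 1 : ℕ) : ℝ) < (n : ℝ) := by push_cast; linarith
    exact_mod_cast h2
  have hkx' : (k : ℝ) < x := by
    refine lt_of_le_of_ne hkx fun h => ?_
    exact hne k (Finset.mem_range.mpr (by omega)) (by rw [← h]; ring)
  -- product over range (k+1)
  have hA : ∏ j ∈ Finset.range (k + 1), |x - (j : ℝ)| < ((k + 1).factorial : ℝ) := by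
    have h1 : ∀ j ∈ Finset.range (k + 1), |x - (j : ℝ)| = x - j := by
      intro j hj
      rw [Finset.mem_range] at hj
      have : (j : ℝ) ≤ k := by exact_mod_cast Nat.lt_succ_iff.mp hj
      exact abs_of_pos (by linarith)
    have h2 : ∏ j ∈ Finset.range (k + 1), (((k + 1 : ℕ) : ℝ) - (j : ℝ)) = (((k+1).factorial : ℕ) : ℝ) :=
      prod_desc_cast' ℝ (k + 1)
    rw [Finset.prod_congr rfl h1, ← h2]
    refine Finset.prod_lt_prod_of_nonempty ?_ ?_ ⟨0, Finset.mem_range.mpr (Nat.succ_pos k)⟩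
    · intro j hj
      rw [Finset.mem_range] at hj
      have : (j : ℝ) ≤ k := by exact_mod_cast Nat.lt_succ_iff.mp hj
      linarith
    · intro j hj
      push_cast
      linarith
  -- product over Ico (k+1) n
  have hB : ∏ j ∈ Finset.Ico (k + 1) n, |x - (j : ℝ)| < ((n - 1 - k).factorial : ℝ) := by
    have h1 : ∀ j ∈ Finset.Ico (k + 1) n, |x - (j : ℝ)| = (j : ℝ) - x := by
      intro j hj
      rw [Finset.mem_Ico] at hj
      have : ((k : ℝ) + 1) ≤ j := by exact_mod_cast hj.1
      rw [abs_sub_comm]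
      exact abs_of_pos (by linarith)
    have h2 : ∏ j ∈ Finset.Ico (k + 1) n, ((j : ℝ) - k) = ((n - 1 - k).factorial : ℝ) := by
      have h3 : ∏ j ∈ Finset.Ico (k + 1) n, ((j : ℝ) - k)
          = ∏ j ∈ Finset.Ico (k + 1) n, ((j - k : ℕ) : ℝ) := by
        refine Finset.prod_congr rfl fun j hj => ?_
        rw [Finset.mem_Ico] at hj
        rw [Nat.cast_sub (by omega)]
      rw [h3, ← Nat.cast_prod, Finset.prod_Ico_eq_prod_range]
      have h4 : ∀ j, k + 1 + j - k = j + 1 := fun j => by omega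
      simp only [h4]
      rw [prod_range_add_one]
      congr 2
      omega
    rw [Finset.prod_congr rfl h1, ← h2]
    refine Finset.prod_lt_prod_of_nonempty ?_ ?_ ?_
    · intro j hj
      rw [Finset.mem_Ico] at hj
      have : ((k : ℝ) + 1) ≤ j := by exact_mod_cast hj.1
      linarith
    · intro j hj
      linarith
    · exact ⟨k + 1, Finset.mem_Ico.mpr ⟨le_refl _, hkn⟩⟩
  have hsplit : (∏ j ∈ Finset.range (k + 1), |x - (j : ℝ)|) *
      (∏ j ∈ Finset.Ico (k + 1) n, |x - (j : ℝ)|) = ∏ j ∈ Finset.range n, |x - (j : ℝ)| :=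
    Finset.prod_range_mul_prod_Ico _ (by omega)
  have habs : ∏ j ∈ Finset.range n, |x - (j : ℝ)| = ((n + 1).factorial : ℝ) := by
    rw [← Finset.abs_prod, hprod, abs_of_pos hfacpos]
  have hnat : (k + 1).factorial * (n - 1 - k).factorial ≤ n.factorial := by
    have h := Nat.factorial_mul_factorial_dvd_factorial_add (k + 1) (n - 1 - k)
    rw [show k + 1 + (n - 1 - k) = n from by omega] at h
    exact Nat.le_of_dvd n.factorial_pos h
  have hltfac : n.factorial < (n + 1).factorial := (Nat.factorial_lt (by omega)).mpr (by omega)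
  have hnonneg1 : (0 : ℝ) ≤ ∏ j ∈ Finset.range (k + 1), |x - (j : ℝ)| :=
    Finset.prod_nonneg fun j _ => abs_nonneg _
  have hnonneg2 : (0 : ℝ) ≤ ((n - 1 - k).factorial : ℝ) := Nat.cast_nonneg _
  have hmul : (∏ j ∈ Finset.range (k + 1), |x - (j : ℝ)|) *
      (∏ j ∈ Finset.Ico (k + 1) n, |x - (j : ℝ)|)
      < ((k + 1).factorial : ℝ) * ((n - 1 - k).factorial : ℝ) := by
    refine mul_lt_mul'' hA hB hnonneg1 (Finset.prod_nonneg fun j _ => abs_nonneg _)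
  rw [hsplit, habs] at hmul
  have hfin : (((k + 1).factorial * (n - 1 - k).factorial : ℕ) : ℝ) < ((n + 1).factorial : ℝ) := by
    exact_mod_cast lt_of_le_of_lt hnat hltfac
  rw [Nat.cast_mul] at hfin
  linarith



/-- The polynomial p(s) = (s)_{d-1} - d! (falling factorial minus d factorial) has
exactly d-1 pairwise distinct complex roots, s = d is one of them, and every other root
has real part strictly less than d. -/
theorem fallingFactorial_sub_factorial_roots
    (d : ℕ) (hd : 2 ≤ d) :
    (∏ i ∈ Finset.range (d - 1), ((d : ℂ) - (i : ℂ))) - (d.factorial : ℂ) = 0 ∧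
    (∃ S : Finset ℂ, S.card = d - 1 ∧
      ∀ z : ℂ, ((∏ i ∈ Finset.range (d - 1), (z - (i : ℂ))) - (d.factorial : ℂ) = 0 ↔ z ∈ S)) ∧
    ∀ z : ℂ, (∏ i ∈ Finset.range (d - 1), (z - (i : ℂ))) - (d.factorial : ℂ) = 0 →
      z ≠ (d : ℂ) → z.re < d := by
  obtain ⟨n, rfl⟩ : ∃ n, d = n + 1 := ⟨d - 1, by omega⟩
  have hn : 1 ≤ n := by omega
  simp only [Nat.add_sub_cancel]
  set P : Polynomial ℂ := (∏ i ∈ Finset.range n, (X - C (i : ℂ))) - C (((n + 1).factorial : ℂ))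
    with hPdef
  have hfac0 : (((n + 1).factorial : ℕ) : ℂ) ≠ 0 :=
    Nat.cast_ne_zero.mpr (n + 1).factorial_pos.ne'
  have heval : ∀ z : ℂ, P.eval z
      = (∏ i ∈ Finset.range n, (z - (i : ℂ))) - (((n + 1).factorial : ℕ) : ℂ) := by
    intro z
    simp [hPdef, eval_prod]
  have hmonic : (∏ i ∈ Finset.range n, (X - C (i : ℂ))).Monic :=
    monic_prod_of_monic _ _ fun i _ => monic_X_sub_C _
  have hdeg : P.natDegree = n := by
    rw [hPdef, natDegree_sub_C,
      Polynomial.natDegree_prod_of_monic _ _ fun i _ => monic_X_sub_C _]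
    simp only [natDegree_X_sub_C]
    simp
  have hP0 : P ≠ 0 := by
    intro h
    rw [h, natDegree_zero] at hdeg
    omega
  refine ⟨?_, ⟨P.roots.toFinset, ?_, ?_⟩, ?_⟩
  · -- part 1 : d is a root
    rw [sub_eq_zero]
    have := prod_desc_cast ℂ n
    push_cast at this ⊢
    exact this
  · -- part 2a : card
    have hcard : Multiset.card P.roots = n := by
      rw [← hdeg]
      exact Polynomial.splits_iff_card_roots.mp (IsAlgClosed.splits P)
    have hnodup : P.roots.Nodup := by
      rw [Multiset.nodup_iff_count_le_one]
      intro a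
      by_contra hcount
      push_neg at hcount
      rw [Polynomial.count_roots] at hcount
      have hroot : P.IsRoot a := (rootMultiplicity_pos hP0).mp (by omega)
      have hdm : rootMultiplicity a (derivative P) = rootMultiplicity a P - 1 :=
        derivative_rootMultiplicity_of_root hroot
      have hDpos : 0 < rootMultiplicity a (derivative P) := by omega
      have hder0 : derivative P ≠ 0 := by
        intro h
        rw [h, rootMultiplicity_zero] at hDpos
        omega
      have hroot' : (derivative P).IsRoot a := (rootMultiplicity_pos hder0).mp hDpos
      -- from hroot : the product equals (n+1)!
      have hQ : ∏ i ∈ Finset.range n, (a - (i : ℂ)) = (((n + 1).factorial : ℕ) : ℂ) := by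
        have := hroot
        rw [IsRoot.def, heval, sub_eq_zero] at this
        exact this
      have hneC : ∀ j ∈ Finset.range n, a - (j : ℂ) ≠ 0 := by
        intro j hj h
        rw [Finset.prod_eq_zero hj h] at hQ
        exact hfac0 hQ.symm
      -- derivative formula
      have hD : derivative P = ∑ j ∈ Finset.range n,
          ∏ i ∈ (Finset.range n).erase j, (X - C (i : ℂ)) := by
        rw [hPdef, derivative_sub, derivative_C, sub_zero, derivative_finset_prod]
        refine Finset.sum_congr rfl fun j hj => ?_
        simp
      have hsumC : ∑ j ∈ Finset.range n,
          ∏ i ∈ (Finset.range n).erase j, (a - (i : ℂ)) = 0 := by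
        have h := hroot'
        rw [IsRoot.def, hD] at h
        simpa [eval_finset_sum, eval_prod] using h
      have hterm : ∀ j ∈ Finset.range n,
          ∏ i ∈ (Finset.range n).erase j, (a - (i : ℂ))
            = (((n + 1).factorial : ℕ) : ℂ) * (a - (j : ℂ))⁻¹ := by
        intro j hj
        have h1 := Finset.mul_prod_erase (Finset.range n) (fun i => a - (i : ℂ)) hj
        rw [hQ] at h1
        field_simp [hneC j hj]
        linear_combination h1
      rw [Finset.sum_congr rfl hterm, ← Finset.mul_sum, mul_eq_zero] at hsumC
      have hS : ∑ j ∈ Finset.range n, (a - (j : ℂ))⁻¹ = 0 := hsumC.resolve_left hfac0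
      -- imaginary part: a is real
      have him : a.im = 0 := by
        have h1 : ∑ j ∈ Finset.range n, -a.im / Complex.normSq (a - (j : ℂ)) = 0 := by
          calc ∑ j ∈ Finset.range n, -a.im / Complex.normSq (a - (j : ℂ))
              = ∑ j ∈ Finset.range n, ((a - (j : ℂ))⁻¹).im :=
                Finset.sum_congr rfl fun j hj => by
                  rw [Complex.inv_im, Complex.sub_im, Complex.natCast_im, sub_zero]
            _ = (∑ j ∈ Finset.range n, (a - (j : ℂ))⁻¹).im := (Complex.im_sum _ _).symm
            _ = 0 := by rw [hS]; rfl
        have h2 : -a.im * ∑ j ∈ Finset.range n, (Complex.normSq (a - (j : ℂ)))⁻¹ = 0 := by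
          rw [Finset.mul_sum, ← h1]
          exact Finset.sum_congr rfl fun j hj => by rw [div_eq_mul_inv]
        have h3 : 0 < ∑ j ∈ Finset.range n, (Complex.normSq (a - (j : ℂ)))⁻¹ :=
          Finset.sum_pos
            (fun j hj => inv_pos.mpr (Complex.normSq_pos.mpr (hneC j hj)))
            ⟨0, Finset.mem_range.mpr hn⟩
        rcases mul_eq_zero.mp h2 with h | h
        · exact neg_eq_zero.mp h
        · exact absurd h h3.ne'
      have ha : a = (a.re : ℂ) := Complex.ext rfl (by simp [him])
      have hprodR : ∏ j ∈ Finset.range n, (a.re - (j : ℝ)) = (((n + 1).factorial : ℕ) : ℝ) := by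
        have h := hQ
        rw [ha] at h
        exact_mod_cast h
      have hsumR : ∑ j ∈ Finset.range n, (a.re - (j : ℝ))⁻¹ = 0 := by
        have h := hS
        rw [ha] at h
        exact_mod_cast h
      exact aux_real n hn a.re hprodR hsumR
    rw [Multiset.toFinset_card_of_nodup hnodup, hcard]
  · -- part 2b : membership
    intro z
    rw [Multiset.mem_toFinset, Polynomial.mem_roots hP0, IsRoot.def, heval]
  · -- part 3
    intro z hroot hz
    by_contra hre
    push_neg at hre
    have hQ : ∏ i ∈ Finset.range n, (z - (i : ℂ)) = (((n + 1).factorial : ℕ) : ℂ) :=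
      sub_eq_zero.mp hroot
    have hkey : ∀ j ∈ Finset.range n, ((n : ℝ) + 1 - (j : ℝ)) < ‖z - (j : ℂ)‖ := by
      intro j hj
      rw [Finset.mem_range] at hj
      have hcast : (((n : ℕ) + 1 : ℕ) : ℝ) = (n : ℝ) + 1 := by push_cast; ring
      rcases lt_or_eq_of_le hre with h | h
      · have h2 : z.re - (j : ℝ) ≤ ‖z - (j : ℂ)‖ := by
          have := Complex.re_le_norm (z - (j : ℂ))
          simpa [Complex.sub_re] using this
        have h3 : (n : ℝ) + 1 < z.re := by
          rw [← hcast]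
          exact_mod_cast h
        linarith
      · have him : z.im ≠ 0 := by
          intro h0
          apply hz
          apply Complex.ext
          · rw [← h]
            simp
          · simp [h0]
        have hzre : z.re = (n : ℝ) + 1 := by rw [← h]; push_cast; ring
        refine lt_of_pow_lt_pow_left₀ 2 (norm_nonneg _) ?_
        rw [Complex.sq_norm, Complex.normSq_apply]
        simp only [Complex.sub_re, Complex.sub_im, Complex.natCast_re, Complex.natCast_im,
          sub_zero, hzre]
        have himsq : 0 < z.im * z.im := mul_self_pos.mpr him
        nlinarith
    have h1 : ∏ j ∈ Finset.range n, ((n : ℝ) + 1 - (j : ℝ))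
        < ∏ j ∈ Finset.range n, ‖z - (j : ℂ)‖ := by
      refine Finset.prod_lt_prod_of_nonempty ?_ hkey ⟨0, Finset.mem_range.mpr hn⟩
      intro j hj
      rw [Finset.mem_range] at hj
      have : (j : ℝ) + 1 ≤ (n : ℝ) := by exact_mod_cast hj
      linarith
    have h2 : ∏ j ∈ Finset.range n, ((n : ℝ) + 1 - (j : ℝ)) = (((n + 1).factorial : ℕ) : ℝ) :=
      prod_desc_cast ℝ n
    have h3 : ∏ j ∈ Finset.range n, ‖z - (j : ℂ)‖ = (((n + 1).factorial : ℕ) : ℝ) := by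
      rw [← norm_prod, hQ, Complex.norm_natCast]
    rw [h2, h3] at h1
    exact lt_irrefl _ h1
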